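/- Let n ≥ 1 and M > 0. For every ε > 0 there exists δ = δ(n, ε, M) > 0 such that the following holds: for every ω ∈ ℝⁿ with |ω| ≤ M and every M-Lipschitz function u : B₁ → ℝ (B₁ the open unit ball of ℝⁿ) satisfying |{x ∈ B₁ : u is differentiable at x and |∇u(x) − ω| ≥ δ}| ≤ δ (Lebesgue measure), one has |u(x) − u(0) − ω·x| ≤ ε for every x ∈ B₁. -/

import Mathlib

open MeasureTheory

section AlmostAffineAux

open Metric Set MeasureTheory Filter

variable {n : ℕ}

local notation "E" => EuclideanSpace ℝ (Fin n)

/-- Key averaging lemma: mean value estimate for the averaged translate. -/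
lemma aux_key (v : EuclideanSpace ℝ (Fin n) → ℝ) (C : NNReal)
    (hv : LipschitzOnWith C v (ball (0 : E) 1))
    (w : E) (r σ : ℝ) (hr : 0 < r) (hσ : 0 < σ)
    (hsub : ∀ y ∈ ball (0 : E) r, ∀ s ∈ Ioo (-σ) (1 + σ), y + s • w ∈ ball (0 : E) 1)
    (K : ℝ)
    (hK : ∀ t ∈ Icc (0:ℝ) 1,
      ∫ y in ball (0 : E) r, |fderiv ℝ v (y + t • w) w| ≤ K) :
    |∫ y in ball (0 : E) r, (v (y + w) - v y)| ≤ K := by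
  have contv : ContinuousOn v (ball (0 : E) 1) := hv.continuousOn
  -- continuity of translates
  have contTrans : ∀ s ∈ Ioo (-σ) (1+σ), ContinuousOn (fun y : E => v (y + s • w)) (ball (0:E) r) :=
    fun s hs => contv.comp (continuous_add_right (s • w)).continuousOn
      (fun y hy => hsub y hy s hs)
  -- integrability of translates
  have hint : ∀ s ∈ Ioo (-σ) (1+σ),
      IntegrableOn (fun y : E => v (y + s • w)) (ball (0:E) r) volume := by
    intro s hs
    refine ⟨(contTrans s hs).aestronglyMeasurable measurableSet_ball,
      HasFiniteIntegral.restrict_of_bounded (C := |v 0| + C) measure_ball_lt_top ?_⟩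
    filter_upwards [ae_restrict_mem measurableSet_ball] with y hy
    have h1 : y + s • w ∈ ball (0:E) 1 := hsub y hy s hs
    have h2 := hv.norm_sub_le h1 (mem_ball_self one_pos)
    have h3 : ‖y + s • w - 0‖ ≤ 1 := by
      rw [sub_zero]; exact (mem_ball_zero_iff.1 h1).le
    have hthis : ‖v (y + s • w)‖ ≤ ‖v (y + s • w) - v 0‖ + ‖v 0‖ := by
      simpa using norm_add_le (v (y + s • w) - v 0) (v 0)
    calc ‖v (y + s • w)‖ ≤ ‖v (y + s • w) - v 0‖ + ‖v 0‖ := hthis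
      _ ≤ C * ‖y + s • w - 0‖ + ‖v 0‖ := by gcongr
      _ ≤ C * 1 + ‖v 0‖ := by gcongr
      _ = |v 0| + C := by rw [Real.norm_eq_abs]; ring
  -- Rademacher
  have hrad : ∀ᵐ z : E ∂volume, z ∈ ball (0:E) 1 → DifferentiableAt ℝ v z := by
    filter_upwards [hv.ae_differentiableWithinAt_of_mem] with z hz hzmem
    exact (hz hzmem).differentiableAt (isOpen_ball.mem_nhds hzmem)
  set A : ℝ → ℝ := fun t => ∫ y in ball (0:E) r, v (y + t • w) with hA
  set A' : ℝ → ℝ := fun t => ∫ y in ball (0:E) r, fderiv ℝ v (y + t • w) w with hA'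
  have hAder : ∀ t ∈ Icc (0:ℝ) 1, HasDerivAt A (A' t) t := by
    intro t ht
    have t_mem : t ∈ Ioo (-σ) (1+σ) := ⟨by linarith [ht.1], by linarith [ht.2]⟩
    have hIoo_nhds : Ioo (-σ) (1+σ) ∈ nhds t := Ioo_mem_nhds t_mem.1 t_mem.2
    rw [hasDerivAt_iff_tendsto_slope]
    -- transfer Rademacher along the translation
    have htrans : ∀ᵐ y : E ∂volume,
        (y + t • w ∈ ball (0:E) 1 → DifferentiableAt ℝ v (y + t • w)) := by
      rw [ae_iff] at hrad ⊢
      have : {y : E | ¬(y + t • w ∈ ball (0:E) 1 → DifferentiableAt ℝ v (y + t • w))}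
          = (fun y : E => y + t • w) ⁻¹'
            {z : E | ¬(z ∈ ball (0:E) 1 → DifferentiableAt ℝ v z)} := rfl
      rw [this, measure_preimage_add_right]
      exact hrad
    have h_lim : ∀ᵐ y ∂(volume.restrict (ball (0:E) r)),
        Tendsto (fun s => (s - t)⁻¹ * (v (y + s • w) - v (y + t • w))) (nhdsWithin t {t}ᶜ)
          (nhds (fderiv ℝ v (y + t • w) w)) := by
      filter_upwards [ae_restrict_of_ae htrans, ae_restrict_mem measurableSet_ball] with y h1 h2
      have hy : DifferentiableAt ℝ v (y + t • w) := h1 (hsub y h2 t t_mem)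
      have hc : HasDerivAt (fun s : ℝ => y + s • w) w t := by
        simpa using ((hasDerivAt_id t).smul_const w).const_add y
      have hcomp : HasDerivAt (fun s : ℝ => v (y + s • w)) (fderiv ℝ v (y + t • w) w) t :=
        hy.hasFDerivAt.comp_hasDerivAt t hc
      have := hasDerivAt_iff_tendsto_slope.1 hcomp
      refine this.congr fun s => ?_
      rw [slope_def_field]; ring
    have h_bound : ∀ᶠ s in nhdsWithin t {t}ᶜ, ∀ᵐ y ∂(volume.restrict (ball (0:E) r)),
        ‖(s - t)⁻¹ * (v (y + s • w) - v (y + t • w))‖ ≤ (C : ℝ) * ‖w‖ := by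
      filter_upwards [nhdsWithin_le_nhds hIoo_nhds, self_mem_nhdsWithin] with s hs hst
      filter_upwards [ae_restrict_mem measurableSet_ball] with y hy
      have h1 : y + s • w ∈ ball (0:E) 1 := hsub y hy s hs
      have h2 : y + t • w ∈ ball (0:E) 1 := hsub y hy t t_mem
      have hl := hv.norm_sub_le h1 h2
      have he : y + s • w - (y + t • w) = (s - t) • w := by
        rw [sub_smul]; abel
      rw [he, norm_smul, Real.norm_eq_abs] at hl
      have hst' : s ≠ t := by simpa [Set.mem_compl_iff] using hst
      have habs : 0 < |s - t| := abs_pos.2 (sub_ne_zero.2 hst')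
      rw [norm_mul, Real.norm_eq_abs, Real.norm_eq_abs, abs_inv]
      calc |s - t|⁻¹ * |v (y + s • w) - v (y + t • w)|
          ≤ |s - t|⁻¹ * ((C : ℝ) * (|s - t| * ‖w‖)) := by
            gcongr
            simpa [Real.norm_eq_abs] using hl
        _ = (C : ℝ) * ‖w‖ := by
            rw [show (C:ℝ) * (|s - t| * ‖w‖) = |s - t| * ((C:ℝ) * ‖w‖) by ring,
              inv_mul_cancel_left₀ habs.ne']
    have hF_meas : ∀ᶠ s in nhdsWithin t {t}ᶜ,
        AEStronglyMeasurable (fun y : E => (s - t)⁻¹ * (v (y + s • w) - v (y + t • w)))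
          (volume.restrict (ball (0:E) r)) := by
      filter_upwards [nhdsWithin_le_nhds hIoo_nhds] with s hs
      exact (continuousOn_const.mul ((contTrans s hs).sub (contTrans t t_mem))).aestronglyMeasurable
        measurableSet_ball
    have hDCT := MeasureTheory.tendsto_integral_filter_of_dominated_convergence
      (μ := volume.restrict (ball (0:E) r)) (l := nhdsWithin t {t}ᶜ)
      (F := fun s (y : E) => (s - t)⁻¹ * (v (y + s • w) - v (y + t • w)))
      (f := fun y : E => fderiv ℝ v (y + t • w) w)
      (bound := fun _ => (C : ℝ) * ‖w‖) hF_meas h_bound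
      (integrableOn_const measure_ball_lt_top.ne) h_lim
    refine Tendsto.congr' ?_ hDCT
    filter_upwards [nhdsWithin_le_nhds hIoo_nhds] with s hs
    rw [MeasureTheory.integral_const_mul, MeasureTheory.integral_sub (hint s hs) (hint t t_mem)]
    rw [slope_def_field]
    simp [hA, div_eq_inv_mul]
  -- mean value inequality
  have hbound : ∀ t ∈ Icc (0:ℝ) 1, ‖A' t‖ ≤ K := by
    intro t ht
    calc ‖A' t‖ ≤ ∫ y in ball (0:E) r, ‖fderiv ℝ v (y + t • w) w‖ :=
          norm_integral_le_integral_norm _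
      _ = ∫ y in ball (0:E) r, |fderiv ℝ v (y + t • w) w| := by
          simp [Real.norm_eq_abs]
      _ ≤ K := hK t ht
  have hMVT := Convex.norm_image_sub_le_of_norm_hasDerivWithin_le
    (f := A) (f' := A') (C := K) (s := Icc (0:ℝ) 1)
    (fun t ht => (hAder t ht).hasDerivWithinAt) hbound (convex_Icc 0 1)
    (left_mem_Icc.2 zero_le_one) (right_mem_Icc.2 zero_le_one)
  have h10 : σ < 1 + σ := by linarith
  have h1m : (1:ℝ) ∈ Ioo (-σ) (1+σ) := ⟨by linarith, by linarith⟩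
  have h0m : (0:ℝ) ∈ Ioo (-σ) (1+σ) := ⟨by linarith, by linarith⟩
  have e1 : A 1 = ∫ y in ball (0:E) r, v (y + w) := by simp [hA]
  have e0 : A 0 = ∫ y in ball (0:E) r, v y := by simp [hA]
  have hi1 : IntegrableOn (fun y : E => v (y + w)) (ball (0:E) r) volume := by
    have := hint 1 h1m; simpa using this
  have hi0 : IntegrableOn (fun y : E => v y) (ball (0:E) r) volume := by
    have := hint 0 h0m; simpa using this
  have hsub' : (∫ y in ball (0:E) r, (v (y + w) - v y)) = A 1 - A 0 := by
    rw [MeasureTheory.integral_sub hi1 hi0, e1, e0]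
  rw [hsub']
  calc |A 1 - A 0| = ‖A 1 - A 0‖ := (Real.norm_eq_abs _).symm
    _ ≤ K * ‖(1:ℝ) - 0‖ := hMVT
    _ = K := by simp

set_option maxHeartbeats 1000000 in
open Metric Set MeasureTheory Filter in
lemma aux_main
    (n : ℕ) (hn : 1 ≤ n) (M : ℝ) (hM : 0 < M) (ε : ℝ) (hε : 0 < ε) :
    ∃ δ : ℝ, 0 < δ ∧
      ∀ ω : EuclideanSpace ℝ (Fin n), ‖ω‖ ≤ M →
      ∀ u : EuclideanSpace ℝ (Fin n) → ℝ,
        (∀ x ∈ Metric.ball (0 : EuclideanSpace ℝ (Fin n)) 1,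
          ∀ y ∈ Metric.ball (0 : EuclideanSpace ℝ (Fin n)) 1,
            |u x - u y| ≤ M * ‖x - y‖) →
        volume {x ∈ Metric.ball (0 : EuclideanSpace ℝ (Fin n)) 1 |
            DifferentiableAt ℝ u x ∧ δ ≤ ‖gradient u x - ω‖} ≤ ENNReal.ofReal δ →
        ∀ x ∈ Metric.ball (0 : EuclideanSpace ℝ (Fin n)) 1,
          |u x - u 0 - (inner ℝ ω x : ℝ)| ≤ ε := by
  classical
  set θ : ℝ := min (1/2) (ε / (8 * M)) with hθdef
  have hθ0 : 0 < θ := lt_min (by norm_num) (by positivity)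
  have hθh : θ ≤ 1/2 := min_le_left _ _
  have hθε : θ ≤ ε / (8*M) := min_le_right _ _
  set r : ℝ := θ / 2 with hrdef
  have hr0 : 0 < r := by positivity
  set V : ℝ := (volume (ball (0 : EuclideanSpace ℝ (Fin n)) r)).toReal with hVdef
  have hV0 : 0 < V := by
    rw [hVdef, ENNReal.toReal_pos_iff]
    exact ⟨measure_ball_pos _ _ hr0, measure_ball_lt_top⟩
  set δ : ℝ := (ε/2) * V / (V + 2*M) with hδdef
  have hδ0 : 0 < δ := by positivity
  refine ⟨δ, hδ0, ?_⟩
  intro ω hω u hLip hbadmeasure x hx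
  set ℓ : EuclideanSpace ℝ (Fin n) →L[ℝ] ℝ :=
    (InnerProductSpace.toDual ℝ (EuclideanSpace ℝ (Fin n))) ω with hℓdef
  have hℓapp : ∀ z, ℓ z = (inner ℝ ω z : ℝ) := fun z => InnerProductSpace.toDual_apply_apply
  have hℓnorm : ‖ℓ‖ = ‖ω‖ := (InnerProductSpace.toDual ℝ (EuclideanSpace ℝ (Fin n))).norm_map ω
  set v : EuclideanSpace ℝ (Fin n) → ℝ := fun z => u z - ℓ z with hvdef
  set C : NNReal := (2*M).toNNReal with hCdef
  have hCcoe : (C : ℝ) = 2*M := Real.coe_toNNReal _ (by positivity)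
  have hv : LipschitzOnWith C v (ball (0 : EuclideanSpace ℝ (Fin n)) 1) := by
    rw [lipschitzOnWith_iff_norm_sub_le]
    intro a ha b hb
    have h1 : |u a - u b| ≤ M * ‖a - b‖ := hLip a ha b hb
    have h2 : |ℓ (a - b)| ≤ M * ‖a - b‖ := by
      calc |ℓ (a-b)| = ‖ℓ (a-b)‖ := (Real.norm_eq_abs _).symm
        _ ≤ ‖ℓ‖ * ‖a - b‖ := ℓ.le_opNorm _
        _ ≤ M * ‖a-b‖ := by
            apply mul_le_mul_of_nonneg_right _ (norm_nonneg _)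
            rw [hℓnorm]; exact hω
    have hve : v a - v b = (u a - u b) - ℓ (a - b) := by
      simp only [hvdef, map_sub]; ring
    calc ‖v a - v b‖ = |(u a - u b) - ℓ (a-b)| := by rw [hve, Real.norm_eq_abs]
      _ ≤ |u a - u b| + |ℓ (a-b)| := abs_sub _ _
      _ ≤ M*‖a-b‖ + M*‖a-b‖ := add_le_add h1 h2
      _ = (C:ℝ) * ‖a-b‖ := by rw [hCcoe]; ring
  set w : EuclideanSpace ℝ (Fin n) := (1-θ) • x with hwdef
  have hx1 : ‖x‖ < 1 := mem_ball_zero_iff.1 hx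
  have hwn : ‖w‖ ≤ 1 - θ := by
    rw [hwdef, norm_smul, Real.norm_eq_abs, abs_of_nonneg (by linarith)]
    exact mul_le_of_le_one_right (by linarith) hx1.le
  have hwle1 : ‖w‖ ≤ 1 := by linarith
  set σ : ℝ := θ/2 with hσdef
  have hσ0 : 0 < σ := by positivity
  have hsub : ∀ y ∈ ball (0 : EuclideanSpace ℝ (Fin n)) r, ∀ s ∈ Ioo (-σ) (1+σ),
      y + s • w ∈ ball (0 : EuclideanSpace ℝ (Fin n)) 1 := by
    intro y hy s hs
    rw [mem_ball_zero_iff]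
    have h1 : ‖y + s • w‖ ≤ ‖y‖ + |s| *‖w‖ := by
      calc ‖y + s • w‖ ≤ ‖y‖ + ‖s • w‖ := norm_add_le _ _
        _ = ‖y‖ + |s| *‖w‖ := by rw [norm_smul, Real.norm_eq_abs]
    have h2 : |s| ≤ 1 + σ := abs_le.2 ⟨by linarith [hs.1], hs.2.le⟩
    have hy' : ‖y‖ < r := mem_ball_zero_iff.1 hy
    have h3 : |s| * ‖w‖ ≤ (1+σ)*(1-θ) := by
      apply mul_le_mul h2 hwn (norm_nonneg w) (by linarith)
    have hnum : σ + (1+σ)*(1-θ) < 1 := by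
      rw [hσdef]
      nlinarith [mul_pos hθ0 hθ0]
    linarith [h1, h3, hy', hnum, hrdef.le, hrdef.ge]
  set Ebad : Set (EuclideanSpace ℝ (Fin n)) :=
    {z ∈ ball (0 : EuclideanSpace ℝ (Fin n)) 1 |
      DifferentiableAt ℝ u z ∧ δ ≤ ‖gradient u z - ω‖} with hEdef
  have hmgrad : Measurable (fun z : EuclideanSpace ℝ (Fin n) => gradient u z) := by
    unfold gradient
    exact ((InnerProductSpace.toDual ℝ (EuclideanSpace ℝ (Fin n))).symm.continuous.measurable).comp
      (measurable_fderiv ℝ u)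
  have hEmeas : MeasurableSet Ebad := by
    have : Ebad = ball (0 : EuclideanSpace ℝ (Fin n)) 1 ∩
        ({z | DifferentiableAt ℝ u z} ∩ {z | δ ≤ ‖gradient u z - ω‖}) := by
      ext z; simp [hEdef, and_assoc]
    rw [this]
    exact measurableSet_ball.inter ((measurableSet_of_differentiableAt ℝ u).inter
      (measurableSet_le measurable_const ((hmgrad.sub measurable_const).norm)))
  -- pointwise bound on the derivative of v
  have hptw : ∀ z ∈ ball (0 : EuclideanSpace ℝ (Fin n)) 1,
      |fderiv ℝ v z w| ≤ δ + 2*M * Ebad.indicator (fun _ => (1:ℝ)) z := by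
    intro z hz
    have hind0 : (0:ℝ) ≤ Ebad.indicator (fun _ => (1:ℝ)) z :=
      Set.indicator_nonneg (fun _ _ => zero_le_one) z
    by_cases hd : DifferentiableAt ℝ u z
    · have hfd : HasFDerivAt v (fderiv ℝ u z - ℓ) z := hd.hasFDerivAt.sub ℓ.hasFDerivAt
      have hfde : fderiv ℝ v z = fderiv ℝ u z - ℓ := hfd.fderiv
      have hgradnorm : ‖gradient u z - ω‖ = ‖fderiv ℝ u z - ℓ‖ := by
        have he : gradient u z - ω =
            (InnerProductSpace.toDual ℝ (EuclideanSpace ℝ (Fin n))).symm (fderiv ℝ u z - ℓ) := by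
          rw [map_sub]
          congr 1
          exact ((InnerProductSpace.toDual ℝ (EuclideanSpace ℝ (Fin n))).symm_apply_apply ω).symm
        rw [he, LinearIsometryEquiv.norm_map]
      have hle : |fderiv ℝ v z w| ≤ ‖fderiv ℝ v z‖ * ‖w‖ := by
        rw [← Real.norm_eq_abs]; exact (fderiv ℝ v z).le_opNorm w
      by_cases hzE : z ∈ Ebad
      · have hun : ‖fderiv ℝ u z‖ ≤ M := by
          apply hd.hasFDerivAt.le_of_lip' hM.le
          filter_upwards [isOpen_ball.mem_nhds hz] with a ha
          simpa [Real.norm_eq_abs] using hLip a ha z hz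
        have hvn : ‖fderiv ℝ v z‖ ≤ 2*M := by
          rw [hfde]
          calc ‖fderiv ℝ u z - ℓ‖ ≤ ‖fderiv ℝ u z‖ + ‖ℓ‖ := norm_sub_le _ _
            _ ≤ M + M := add_le_add hun (by rw [hℓnorm]; exact hω)
            _ = 2*M := by ring
        rw [Set.indicator_of_mem hzE]
        calc |fderiv ℝ v z w| ≤ ‖fderiv ℝ v z‖ * ‖w‖ := hle
          _ ≤ (2*M) * 1 := mul_le_mul hvn hwle1 (norm_nonneg w) (by positivity)
          _ ≤ δ + 2*M*1 := by linarith
      · have hlt : ‖gradient u z - ω‖ < δ := by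
          by_contra hcon
          exact hzE ⟨hz, hd, not_lt.1 hcon⟩
        rw [Set.indicator_of_notMem hzE]
        calc |fderiv ℝ v z w| ≤ ‖fderiv ℝ v z‖ * ‖w‖ := hle
          _ ≤ δ * 1 := by
              apply mul_le_mul _ hwle1 (norm_nonneg w) hδ0.le
              rw [hfde, ← hgradnorm]; exact hlt.le
          _ ≤ δ + 2*M*0 := by linarith
    · have hdv : ¬ DifferentiableAt ℝ v z := by
        intro hdv
        apply hd
        have hue : u = fun z => v z + ℓ z := by funext z; simp [hvdef]
        rw [hue]; exact hdv.add ℓ.differentiableAt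
      rw [fderiv_zero_of_not_differentiableAt hdv]
      simp only [ContinuousLinearMap.zero_apply, abs_zero]
      have := mul_nonneg (by positivity : (0:ℝ) ≤ 2*M) hind0
      linarith
  -- the integral bound hypothesis for the key lemma
  have hK : ∀ t ∈ Icc (0:ℝ) 1,
      ∫ y in ball (0 : EuclideanSpace ℝ (Fin n)) r, |fderiv ℝ v (y + t • w) w|
        ≤ δ*V + 2*M*δ := by
    intro t ht
    have htσ : t ∈ Ioo (-σ) (1+σ) := ⟨by linarith [ht.1], by linarith [ht.2]⟩
    set c : EuclideanSpace ℝ (Fin n) := t • w with hcdef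
    have hmapsto : ∀ y ∈ ball (0 : EuclideanSpace ℝ (Fin n)) r,
        y + c ∈ ball (0 : EuclideanSpace ℝ (Fin n)) 1 := fun y hy => hsub y hy t htσ
    set S : Set (EuclideanSpace ℝ (Fin n)) := (fun y => y + c) ⁻¹' Ebad with hSdef
    have hSmeas : MeasurableSet S := hEmeas.preimage (measurable_add_const c)
    have hindeq : ∀ y : EuclideanSpace ℝ (Fin n),
        Ebad.indicator (fun _ => (1:ℝ)) (y + c) = S.indicator (fun _ => (1:ℝ)) y := by
      intro y
      have hyS : y ∈ S ↔ y + c ∈ Ebad := Iff.rfl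
      by_cases h : y + c ∈ Ebad
      · rw [Set.indicator_of_mem h, Set.indicator_of_mem (hyS.2 h)]
      · rw [Set.indicator_of_notMem h, Set.indicator_of_notMem (fun hc => h (hyS.1 hc))]
    have hindle1 : ∀ z, Ebad.indicator (fun _ => (1:ℝ)) z ≤ 1 := by
      intro z
      exact Set.indicator_apply_le' (fun _ => le_rfl) (fun _ => zero_le_one)
    have hint2 : IntegrableOn
        (fun y : EuclideanSpace ℝ (Fin n) => δ + 2*M * S.indicator (fun _ => (1:ℝ)) y)
        (ball (0 : EuclideanSpace ℝ (Fin n)) r) volume := by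
      apply Integrable.add (integrableOn_const measure_ball_lt_top.ne)
      apply Integrable.const_mul
      exact (integrableOn_const measure_ball_lt_top.ne :
        IntegrableOn (fun _ => (1:ℝ)) _ _).indicator hSmeas
    have hint1 : IntegrableOn
        (fun y : EuclideanSpace ℝ (Fin n) => |fderiv ℝ v (y + c) w|)
        (ball (0 : EuclideanSpace ℝ (Fin n)) r) volume := by
      have hmeas : Measurable (fun y : EuclideanSpace ℝ (Fin n) => |fderiv ℝ v (y + c) w|) :=
        ((measurable_fderiv_apply_const ℝ v w).comp (measurable_add_const c)).abs
      refine ⟨hmeas.aestronglyMeasurable.restrict,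
        HasFiniteIntegral.restrict_of_bounded (C := δ + 2*M) measure_ball_lt_top ?_⟩
      filter_upwards [ae_restrict_mem measurableSet_ball] with y hy
      have h := hptw _ (hmapsto y hy)
      rw [Real.norm_eq_abs, abs_abs]
      refine h.trans ?_
      have h2 := mul_le_mul_of_nonneg_left (hindle1 (y + c)) (by positivity : (0:ℝ) ≤ 2*M)
      linarith
    have hSvol : (volume (ball (0 : EuclideanSpace ℝ (Fin n)) r ∩ S)).toReal ≤ δ := by
      apply ENNReal.toReal_le_of_le_ofReal hδ0.le
      refine le_trans (measure_mono inter_subset_right) ?_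
      rw [hSdef, measure_preimage_add_right]
      exact hbadmeasure
    calc ∫ y in ball (0 : EuclideanSpace ℝ (Fin n)) r, |fderiv ℝ v (y + t • w) w|
        ≤ ∫ y in ball (0 : EuclideanSpace ℝ (Fin n)) r,
            (δ + 2*M * S.indicator (fun _ => (1:ℝ)) y) := by
          apply setIntegral_mono_on hint1 hint2 measurableSet_ball
          intro y hy
          have h := hptw _ (hmapsto y hy)
          rw [← hindeq y]
          exact h
      _ = δ * V + 2*M * ∫ y in ball (0 : EuclideanSpace ℝ (Fin n)) r,
            S.indicator (fun _ => (1:ℝ)) y := by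
          rw [integral_add (integrableOn_const measure_ball_lt_top.ne :
              IntegrableOn (fun _ => δ) (ball (0 : EuclideanSpace ℝ (Fin n)) r) volume)
            (Integrable.const_mul ((integrableOn_const measure_ball_lt_top.ne :
              IntegrableOn (fun _ => (1:ℝ)) _ _).indicator hSmeas) _),
            integral_const, integral_const_mul]
          simp only [hVdef, smul_eq_mul, measureReal_restrict_apply_univ, measureReal_def,
            Measure.restrict_apply MeasurableSet.univ, Set.univ_inter]
          ring
      _ ≤ δ*V + 2*M*δ := by
          have h1 : ∫ y in ball (0 : EuclideanSpace ℝ (Fin n)) r,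
              S.indicator (fun _ => (1:ℝ)) y
              = (volume (ball (0 : EuclideanSpace ℝ (Fin n)) r ∩ S)).toReal := by
            rw [setIntegral_indicator hSmeas]
            simp [setIntegral_const, measureReal_def]
          rw [h1]
          have h2 := mul_le_mul_of_nonneg_left hSvol (by positivity : (0:ℝ) ≤ 2*M)
          linarith
  -- apply the key lemma
  have hkey := aux_key v C hv w r σ hr0 hσ0 hsub (δ*V + 2*M*δ) hK
  -- compare the averaged difference with v w - v 0
  have hwmem : w ∈ ball (0 : EuclideanSpace ℝ (Fin n)) 1 :=
    mem_ball_zero_iff.2 (by linarith)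
  have h0mem : (0 : EuclideanSpace ℝ (Fin n)) ∈ ball (0 : EuclideanSpace ℝ (Fin n)) 1 :=
    mem_ball_self one_pos
  have hb_r1 : ball (0 : EuclideanSpace ℝ (Fin n)) r ⊆ ball (0 : EuclideanSpace ℝ (Fin n)) 1 :=
    ball_subset_ball (by linarith)
  have hptdiff : ∀ y ∈ ball (0 : EuclideanSpace ℝ (Fin n)) r,
      |(v (y+w) - v y) - (v w - v 0)| ≤ 2*(C:ℝ)*r := by
    intro y hy
    have hy1 : y ∈ ball (0 : EuclideanSpace ℝ (Fin n)) 1 := hb_r1 hy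
    have hyw : y + w ∈ ball (0 : EuclideanSpace ℝ (Fin n)) 1 := by
      have := hsub y hy 1 ⟨by linarith, by linarith⟩
      simpa using this
    have e1 : |v (y+w) - v w| ≤ (C:ℝ) * ‖y‖ := by
      have h := hv.norm_sub_le hyw hwmem
      rw [Real.norm_eq_abs] at h
      simpa [add_sub_cancel_right] using h
    have e0 : |v y - v 0| ≤ (C:ℝ)*‖y‖ := by
      have h := hv.norm_sub_le hy1 h0mem
      rw [Real.norm_eq_abs] at h
      simpa using h
    have hyr : ‖y‖ ≤ r := (mem_ball_zero_iff.1 hy).le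
    calc |(v (y+w) - v y) - (v w - v 0)| = |(v (y+w) - v w) - (v y - v 0)| := by ring_nf
      _ ≤ |v (y+w) - v w| + |v y - v 0| := abs_sub _ _
      _ ≤ (C:ℝ)*‖y‖ + (C:ℝ)*‖y‖ := add_le_add e1 e0
      _ ≤ 2*(C:ℝ)*r := by
          have h2 := mul_le_mul_of_nonneg_left hyr C.coe_nonneg
          linarith
  have hcontsub : ContinuousOn (fun y : EuclideanSpace ℝ (Fin n) =>
      (v (y+w) - v y) - (v w - v 0)) (ball (0 : EuclideanSpace ℝ (Fin n)) r) := by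
    have c1 : ContinuousOn (fun y : EuclideanSpace ℝ (Fin n) => v (y + w))
        (ball (0 : EuclideanSpace ℝ (Fin n)) r) :=
      hv.continuousOn.comp (continuous_add_right w).continuousOn
        (fun y hy => by
          have := hsub y hy 1 ⟨by linarith, by linarith⟩
          simpa using this)
    have c0 : ContinuousOn (fun y : EuclideanSpace ℝ (Fin n) => v y)
        (ball (0 : EuclideanSpace ℝ (Fin n)) r) := hv.continuousOn.mono hb_r1
    exact (c1.sub c0).sub continuousOn_const
  have hintsub : IntegrableOn (fun y : EuclideanSpace ℝ (Fin n) =>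
      (v (y+w) - v y) - (v w - v 0)) (ball (0 : EuclideanSpace ℝ (Fin n)) r) volume := by
    refine ⟨hcontsub.aestronglyMeasurable measurableSet_ball,
      HasFiniteIntegral.restrict_of_bounded (C := 2*(C:ℝ)*r) measure_ball_lt_top ?_⟩
    filter_upwards [ae_restrict_mem measurableSet_ball] with y hy
    rw [Real.norm_eq_abs]
    exact hptdiff y hy
  have hintconst : IntegrableOn (fun _ : EuclideanSpace ℝ (Fin n) => v w - v 0)
      (ball (0 : EuclideanSpace ℝ (Fin n)) r) volume :=
    integrableOn_const measure_ball_lt_top.ne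
  have hint_main : IntegrableOn (fun y : EuclideanSpace ℝ (Fin n) => v (y+w) - v y)
      (ball (0 : EuclideanSpace ℝ (Fin n)) r) volume := by
    have he : (fun y : EuclideanSpace ℝ (Fin n) => v (y+w) - v y)
        = fun y => ((v (y+w) - v y) - (v w - v 0)) + (v w - v 0) := by
      funext y; ring
    rw [he]
    exact hintsub.add hintconst
  have heq : V * (v w - v 0)
      = (∫ y in ball (0 : EuclideanSpace ℝ (Fin n)) r, (v (y+w) - v y))
        - ∫ y in ball (0 : EuclideanSpace ℝ (Fin n)) r, ((v (y+w) - v y) - (v w - v 0)) := by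
    rw [← integral_sub hint_main hintsub]
    simp only [sub_sub_cancel]
    rw [setIntegral_const]
    simp only [hVdef, smul_eq_mul, measureReal_def]
  have habs2 : |∫ y in ball (0 : EuclideanSpace ℝ (Fin n)) r,
      ((v (y+w) - v y) - (v w - v 0))| ≤ 2*(C:ℝ)*r*V := by
    rw [← Real.norm_eq_abs]
    calc ‖∫ y in ball (0 : EuclideanSpace ℝ (Fin n)) r, ((v (y+w) - v y) - (v w - v 0))‖
        ≤ ∫ y in ball (0 : EuclideanSpace ℝ (Fin n)) r, ‖(v (y+w) - v y) - (v w - v 0)‖ :=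
          norm_integral_le_integral_norm _
      _ ≤ ∫ _y in ball (0 : EuclideanSpace ℝ (Fin n)) r, (2*(C:ℝ)*r) := by
          apply setIntegral_mono_on hintsub.norm
            (integrableOn_const measure_ball_lt_top.ne) measurableSet_ball
          intro y hy
          rw [Real.norm_eq_abs]
          exact hptdiff y hy
      _ = 2*(C:ℝ)*r*V := by
          rw [setIntegral_const]
          simp only [hVdef, smul_eq_mul, measureReal_def]
          ring
  have hVest : |V * (v w - v 0)| ≤ (δ*V + 2*M*δ) + 2*(C:ℝ)*r*V := by
    rw [heq]
    exact (abs_sub _ _).trans (add_le_add hkey habs2)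
  have hfrac : |v w - v 0| ≤ (δ*V + 2*M*δ + 2*(C:ℝ)*r*V)/V := by
    rw [abs_mul, abs_of_pos hV0] at hVest
    rw [le_div_iff₀ hV0]
    calc |v w - v 0| * V = V * |v w - v 0| := mul_comm _ _
      _ ≤ (δ*V + 2*M*δ) + 2*(C:ℝ)*r*V := hVest
      _ = δ*V + 2*M*δ + 2*(C:ℝ)*r*V := by ring
  -- distance from x to w
  have hxw : |v x - v w| ≤ 2*M*θ := by
    have hxwsub : x - w = θ • x := by
      rw [hwdef, sub_smul, one_smul]
      abel
    have h := hv.norm_sub_le hx hwmem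
    rw [Real.norm_eq_abs] at h
    refine h.trans ?_
    rw [hxwsub, norm_smul, Real.norm_eq_abs, abs_of_pos hθ0, hCcoe]
    exact mul_le_mul_of_nonneg_left (mul_le_of_le_one_right hθ0.le hx1.le)
      (by positivity : (0:ℝ) ≤ 2*M)
  -- numerics
  have hδmul : δ * (V + 2*M) = (ε/2) * V := by
    rw [hδdef]; field_simp
  have h2Cr : 2*(C:ℝ)*r = 2*M*θ := by rw [hCcoe, hrdef]; ring
  have hdiveq : (δ*V + 2*M*δ + 2*(C:ℝ)*r*V)/V = ε/2 + 2*M*θ := by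
    rw [h2Cr, div_eq_iff hV0.ne']
    linear_combination hδmul
  have h4Mθ : 4*(M*θ) ≤ ε/2 := by
    rw [le_div_iff₀ (by positivity : (0:ℝ) < 8*M)] at hθε
    linarith
  have hgoal : |v x - v 0| ≤ ε := by
    calc |v x - v 0| ≤ |v x - v w| + |v w - v 0| := abs_sub_le _ _ _
      _ ≤ 2*M*θ + (ε/2 + 2*M*θ) := by
          rw [← hdiveq]
          exact add_le_add hxw hfrac
      _ ≤ ε := by linarith
  have hfinal : u x - u 0 - (inner ℝ ω x : ℝ) = v x - v 0 := by
    have h0 : ℓ 0 = 0 := map_zero ℓ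
    rw [← hℓapp x]
    simp only [hvdef, h0]
    ring
  rw [hfinal]
  exact hgoal


end AlmostAffineAux

/-- **Lipschitz functions with almost-constant gradient are almost affine.**
Let `n ≥ 1` and `M > 0`. For every `ε > 0` there is `δ = δ(n,ε,M) > 0` such that: for every
`ω ∈ ℝⁿ` with `|ω| ≤ M` and every `M`-Lipschitz function `u` on the open unit ball `B₁ ⊆ ℝⁿ`
with `|{x ∈ B₁ : u differentiable at x and |∇u(x) - ω| ≥ δ}| ≤ δ`, one has
`|u(x) - u(0) - ω·x| ≤ ε` for every `x ∈ B₁`. -/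
theorem almost_affine_of_almost_constant_gradient
    (n : ℕ) (hn : 1 ≤ n) (M : ℝ) (hM : 0 < M) (ε : ℝ) (hε : 0 < ε) :
    ∃ δ : ℝ, 0 < δ ∧
      ∀ ω : EuclideanSpace ℝ (Fin n), ‖ω‖ ≤ M →
      ∀ u : EuclideanSpace ℝ (Fin n) → ℝ,
        (∀ x ∈ Metric.ball (0 : EuclideanSpace ℝ (Fin n)) 1,
          ∀ y ∈ Metric.ball (0 : EuclideanSpace ℝ (Fin n)) 1,
            |u x - u y| ≤ M * ‖x - y‖) →
        volume {x ∈ Metric.ball (0 : EuclideanSpace ℝ (Fin n)) 1 |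
            DifferentiableAt ℝ u x ∧ δ ≤ ‖gradient u x - ω‖} ≤ ENNReal.ofReal δ →
        ∀ x ∈ Metric.ball (0 : EuclideanSpace ℝ (Fin n)) 1,
          |u x - u 0 - (inner ℝ ω x : ℝ)| ≤ ε := by
  exact aux_main n hn M hM ε hε
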